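/- arXiv:1609.07274 — 4 statements merged into one kernel-verified Lean document; each statement's English description precedes it below -/
import Mathlib

section
/- Let R₁, …, R_t be finite non-commutative rings with Z(R_i) = {0} for each i. Then the domination number of the commuting graph of the direct product satisfies γ(Γ(R₁ × ⋯ × R_t)) = min over 1 ≤ i ≤ t of γ(Γ(R_i)). -/
open scoped Classical

noncomputable section

/-- The commuting graph of a (non-unital, possibly non-commutative) ring `R`:
vertices are the non-central elements, and two distinct vertices are adjacent
iff they commute. -/
def commutingGraph (R : Type*) [NonUnitalRing R] :
    SimpleGraph {x : R // x ∉ Set.center R} where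
  Adj a b := a ≠ b ∧ (a : R) * b = (b : R) * a
  symm := ⟨by rintro a b ⟨h1, h2⟩; exact ⟨h1.symm, h2.symm⟩⟩
  loopless := ⟨by rintro a ⟨h, -⟩; exact h rfl⟩

/-- A dominating set: every vertex not in `D` is adjacent to some vertex of `D`. -/
def SimpleGraph.IsDominatingSet {V : Type*} (G : SimpleGraph V) (D : Finset V) : Prop :=
  ∀ v, v ∉ D → ∃ u ∈ D, G.Adj u v

/-- The domination number: the minimum cardinality of a dominating set. -/
noncomputable def SimpleGraph.dominationNumber {V : Type*} [Fintype V] (G : SimpleGraph V) : ℕ :=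
  sInf {n | ∃ D : Finset V, G.IsDominatingSet D ∧ D.card = n}

/-- The signed domination number: the minimum total weight of a function
`f : V → {-1, 1}` whose sum over every closed neighbourhood is at least `1`. -/
noncomputable def SimpleGraph.signedDominationNumber {V : Type*} [Fintype V]
    (G : SimpleGraph V) : ℤ :=
  sInf {w : ℤ | ∃ f : V → ℤ, (∀ v, f v = 1 ∨ f v = -1) ∧
    (∀ v : V, 1 ≤ ∑ u ∈ Finset.univ.filter (fun u => G.Adj v u ∨ u = v), f u) ∧
    w = ∑ v, f v}

/-- Underlying type of the ring `E`. -/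
def Ering : Type := ZMod 2 × ZMod 2

instance : Fintype Ering := inferInstanceAs (Fintype (ZMod 2 × ZMod 2))
instance : DecidableEq Ering := inferInstanceAs (DecidableEq (ZMod 2 × ZMod 2))
instance : AddCommGroup Ering := inferInstanceAs (AddCommGroup (ZMod 2 × ZMod 2))
instance : Mul Ering := ⟨fun a b => (b.1 * a.1, b.1 * a.2)⟩

/-- `E = ⟨x,y : 2x=2y=0, x²=x, y²=y, xy=x, yx=y⟩`, realized on `ZMod 2 × ZMod 2`
with `x = (1,0)`, `y = (1,1)` and multiplication `a * b = (b₁a₁, b₁a₂)`. -/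
instance : NonUnitalRing Ering :=
  { (inferInstanceAs (AddCommGroup Ering) : AddCommGroup Ering), (inferInstanceAs (Mul Ering) : Mul Ering) with
    left_distrib := by decide
    right_distrib := by decide
    zero_mul := by decide
    mul_zero := by decide
    mul_assoc := by decide }

/-- Underlying type of the ring `F`. -/
def Fring : Type := ZMod 2 × ZMod 2

instance : Fintype Fring := inferInstanceAs (Fintype (ZMod 2 × ZMod 2))
instance : DecidableEq Fring := inferInstanceAs (DecidableEq (ZMod 2 × ZMod 2))
instance : AddCommGroup Fring := inferInstanceAs (AddCommGroup (ZMod 2 × ZMod 2))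
instance : Mul Fring := ⟨fun a b => (a.1 * b.1, a.1 * b.2)⟩

/-- `F = ⟨x,y : 2x=2y=0, x²=x, y²=y, xy=y, yx=x⟩`, realized on `ZMod 2 × ZMod 2`
with `x = (1,0)`, `y = (1,1)` and multiplication `a * b = (a₁b₁, a₁b₂)`. -/
instance : NonUnitalRing Fring :=
  { (inferInstanceAs (AddCommGroup Fring) : AddCommGroup Fring), (inferInstanceAs (Mul Fring) : Mul Fring) with
    left_distrib := by decide
    right_distrib := by decide
    zero_mul := by decide
    mul_zero := by decide
    mul_assoc := by decide }

lemma domNum_exists {V : Type*} [Fintype V] (G : SimpleGraph V) :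
    ∃ D : Finset V, G.IsDominatingSet D ∧ D.card = G.dominationNumber := by
  have hne : {n | ∃ D : Finset V, G.IsDominatingSet D ∧ D.card = n}.Nonempty :=
    ⟨Finset.univ.card, Finset.univ, fun v hv => absurd (Finset.mem_univ v) hv, rfl⟩
  obtain ⟨D, hD, hc⟩ := Nat.sInf_mem hne
  exact ⟨D, hD, hc⟩

lemma domNum_le {V : Type*} [Fintype V] (G : SimpleGraph V) (D : Finset V)
    (hD : G.IsDominatingSet D) : G.dominationNumber ≤ D.card :=
  Nat.sInf_le ⟨D, hD, rfl⟩

/-- Theorem C: the domination number of the commuting graph of a direct product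
is the minimum of the domination numbers of the factors. -/
theorem stmt_4 (t : ℕ) (ht : 0 < t)
    (R : Fin t → Type*) [∀ i, NonUnitalRing (R i)] [∀ i, Fintype (R i)]
    (hnc : ∀ i, ∃ x y : R i, x * y ≠ y * x)
    (hz : ∀ i, Set.center (R i) = {0}) :
    (commutingGraph (∀ i, R i)).dominationNumber =
      ⨅ i, (commutingGraph (R i)).dominationNumber := by
  haveI : Nonempty (Fin t) := ⟨⟨0, ht⟩⟩
  have hcent : ∀ i (x : R i), x ∉ Set.center (R i) ↔ x ≠ 0 := by
    intro i x; rw [hz i]; simp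
  have hcentP : ∀ x : (∀ i, R i), x ∉ Set.center (∀ i, R i) ↔ x ≠ 0 := by
    intro x
    constructor
    · intro h hx; apply h; subst hx; exact Set.zero_mem_center
    · intro hx hc
      rw [Semigroup.mem_center_iff] at hc
      obtain ⟨i, hi⟩ : ∃ i, x i ≠ 0 := by
        by_contra h; push_neg at h; exact hx (funext h)
      have hxi : x i ∉ Set.center (R i) := (hcent i _).2 hi
      rw [Semigroup.mem_center_iff] at hxi
      push_neg at hxi
      obtain ⟨y, hy⟩ := hxi
      have h2 := congrFun (hc (Function.update (0 : ∀ j, R j) i y)) i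
      simp only [Pi.mul_apply, Function.update_self] at h2
      exact hy h2
  -- Upper bound
  have upper : ∀ j, (commutingGraph (∀ i, R i)).dominationNumber ≤
      (commutingGraph (R j)).dominationNumber := by
    intro j
    obtain ⟨D, hD, hcard⟩ := domNum_exists (commutingGraph (R j))
    obtain ⟨x, y, hxy⟩ := hnc j
    have hxv : x ∉ Set.center (R j) := by
      rw [Semigroup.mem_center_iff]; push_neg
      exact ⟨y, fun h => hxy h.symm⟩
    have hDne : D.Nonempty := by
      by_cases h : (⟨x, hxv⟩ : {z : R j // z ∉ Set.center (R j)}) ∈ D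
      · exact ⟨_, h⟩
      · obtain ⟨u, hu, -⟩ := hD _ h; exact ⟨u, hu⟩
    have hlift : ∀ d : {z : R j // z ∉ Set.center (R j)},
        Function.update (0 : ∀ i, R i) j d.val ∉ Set.center (∀ i, R i) := by
      intro d
      rw [hcentP]
      intro h
      have h2 := congrFun h j
      simp only [Function.update_self, Pi.zero_apply] at h2
      exact (hcent j d.val).1 d.prop h2
    set L : {z : R j // z ∉ Set.center (R j)} →
        {z : (∀ i, R i) // z ∉ Set.center (∀ i, R i)} :=
      fun d => ⟨Function.update (0 : ∀ i, R i) j d.val, hlift d⟩ with hL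
    have hcomm : ∀ (d : R j) (v : ∀ i, R i), d * v j = v j * d →
        Function.update (0 : ∀ i, R i) j d * v = v * Function.update (0 : ∀ i, R i) j d := by
      intro d v h
      funext i
      by_cases hij : i = j
      · subst hij; simp only [Pi.mul_apply, Function.update_self]; exact h
      · simp [Pi.mul_apply, Function.update_of_ne hij]
    have hdom : (commutingGraph (∀ i, R i)).IsDominatingSet (D.image L) := by
      intro v hv
      by_cases hj : (v : ∀ i, R i) j = 0
      · obtain ⟨d, hd⟩ := hDne
        refine ⟨L d, Finset.mem_image_of_mem L hd, ?_, ?_⟩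
        · intro h
          have h2 := congrFun (congrArg Subtype.val h) j
          simp only [hL, Function.update_self] at h2
          rw [hj] at h2
          exact (hcent j d.val).1 d.prop h2
        · exact hcomm d.val v.val (by rw [hj, mul_zero, zero_mul])
      · have hjv : (v : ∀ i, R i) j ∉ Set.center (R j) := (hcent j _).2 hj
        by_cases hmem : (⟨(v : ∀ i, R i) j, hjv⟩ : {z : R j // z ∉ Set.center (R j)}) ∈ D
        · refine ⟨L ⟨(v : ∀ i, R i) j, hjv⟩, Finset.mem_image_of_mem L hmem, ?_, ?_⟩
          · intro h
            exact hv (h ▸ Finset.mem_image_of_mem L hmem)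
          · exact hcomm _ _ rfl
        · obtain ⟨u, hu, hune, hucomm⟩ := hD _ hmem
          refine ⟨L u, Finset.mem_image_of_mem L hu, ?_, hcomm u.val v.val hucomm⟩
          intro h
          apply hune
          have h2 := congrFun (congrArg Subtype.val h) j
          simp only [hL, Function.update_self] at h2
          exact Subtype.ext h2
    calc (commutingGraph (∀ i, R i)).dominationNumber
        ≤ (D.image L).card := domNum_le _ _ hdom
      _ ≤ D.card := Finset.card_image_le
      _ = _ := hcard
  -- Lower bound
  obtain ⟨D, hD, hcard⟩ := domNum_exists (commutingGraph (∀ i, R i))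
  have lower : ∃ i, (commutingGraph (R i)).dominationNumber ≤ D.card := by
    by_contra hcon
    push_neg at hcon
    set Di : ∀ i, Finset {z : R i // z ∉ Set.center (R i)} :=
      fun i => Finset.univ.filter
        (fun u : {z : R i // z ∉ Set.center (R i)} => ∃ d ∈ D, (d : ∀ j, R j) i = u.val)
      with hDi
    have hDicard : ∀ i, (Di i).card ≤ D.card := by
      intro i
      have h1 : (Di i).card ≤ (D.image (fun d => d.val i)).card := by
        apply Finset.card_le_card_of_injOn Subtype.val
        · intro u hu
          rw [hDi] at hu
          simp only [Finset.mem_coe, Finset.mem_filter] at hu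
          obtain ⟨-, d, hd, hdu⟩ := hu
          exact Finset.mem_image.mpr ⟨d, hd, hdu⟩
        · exact fun a _ b _ h => Subtype.ext h
      exact h1.trans Finset.card_image_le
    have hnd : ∀ i, ∃ v, v ∉ Di i ∧
        ∀ u ∈ Di i, ¬ (commutingGraph (R i)).Adj u v := by
      intro i
      by_contra h
      push_neg at h
      exact absurd ((domNum_le _ _ h).trans (hDicard i)) (not_le.mpr (hcon i))
    choose v hv1 hv2 using hnd
    set w : ∀ i, R i := fun i => (v i).val with hw
    have hwnc : w ∉ Set.center (∀ i, R i) := by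
      rw [hcentP]
      intro h
      have i0 : Fin t := Classical.arbitrary _
      exact (hcent i0 _).1 (v i0).prop (congrFun h i0)
    have hWD : (⟨w, hwnc⟩ : {z : (∀ i, R i) // z ∉ Set.center (∀ i, R i)}) ∉ D := by
      intro h
      have i0 : Fin t := Classical.arbitrary _
      apply hv1 i0
      rw [hDi]
      simp only [Finset.mem_filter, Finset.mem_univ, true_and]
      exact ⟨_, h, rfl⟩
    obtain ⟨u, hu, hune, hucomm⟩ := hD _ hWD
    have hzero : ∀ i, (u : ∀ j, R j) i = 0 := by
      intro i
      by_contra hne0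
      have hui : (u : ∀ j, R j) i ∉ Set.center (R i) := (hcent i _).2 hne0
      have hmemDi : (⟨(u : ∀ j, R j) i, hui⟩ : {z : R i // z ∉ Set.center (R i)}) ∈ Di i := by
        rw [hDi]
        simp only [Finset.mem_filter, Finset.mem_univ, true_and]
        exact ⟨u, hu, rfl⟩
      have hci : (u : ∀ j, R j) i * w i = w i * (u : ∀ j, R j) i := by
        have := congrFun hucomm i
        simpa only [Pi.mul_apply] using this
      by_cases heq : (⟨(u : ∀ j, R j) i, hui⟩ : {z : R i // z ∉ Set.center (R i)}) = v i
      · exact hv1 i (heq ▸ hmemDi)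
      · exact hv2 i _ hmemDi ⟨heq, hci⟩
    exact (hcentP u.val).1 u.prop (funext hzero)
  obtain ⟨i, hi⟩ := lower
  refine le_antisymm (le_ciInf upper) ?_
  calc (⨅ i, (commutingGraph (R i)).dominationNumber)
      ≤ (commutingGraph (R i)).dominationNumber := ciInf_le (OrderBot.bddBelow _) i
    _ ≤ D.card := hi
    _ = _ := hcard

end
end

section
/- Let R be a finite non-commutative ring of odd order n with Z(R) = {0}. Then γ_s(Γ(R)) = n - 1 if and only if Γ(R) is the disjoint union of (n-1)/2 copies of P₂, i.e. every vertex of Γ(R) has degree exactly 1. -/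
open scoped Classical

noncomputable section

lemma aux_sum_pm_mem {V : Type*} (S : Finset V) (v : V) (f : V → ℤ)
    (hfv : f v = -1) (hfu : ∀ u, u ≠ v → f u = 1) (hv : v ∈ S) :
    ∑ u ∈ S, f u = S.card - 2 := by
  classical
  have h1 : 1 ≤ S.card := Finset.card_pos.mpr ⟨v, hv⟩
  rw [← Finset.sum_erase_add S f hv, hfv]
  have h2 : ∑ u ∈ S.erase v, f u = ((S.erase v).card : ℤ) := by
    rw [Finset.sum_congr rfl (fun u hu => hfu u (Finset.ne_of_mem_erase hu))]
    simp
  rw [h2, Finset.card_erase_of_mem hv, Nat.cast_sub h1]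
  push_cast
  ring

lemma aux_sum_pm_not {V : Type*} (S : Finset V) (v : V) (f : V → ℤ)
    (hfu : ∀ u, u ≠ v → f u = 1) (hv : v ∉ S) :
    ∑ u ∈ S, f u = S.card := by
  rw [Finset.sum_congr rfl (fun u hu => hfu u (fun h => hv (h ▸ hu)))]
  simp

lemma aux_three {V : Type*} (S : Finset V) (b x y : V) (hb : b ∈ S) (hx : x ∈ S)
    (hy : y ∈ S) (hbx : b ≠ x) (hby : b ≠ y) (hxy : x ≠ y) : 3 ≤ S.card := by
  classical
  have hsub : ({b, x, y} : Finset V) ⊆ S := by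
    intro w hw
    simp only [Finset.mem_insert, Finset.mem_singleton] at hw
    rcases hw with rfl | rfl | rfl <;> assumption
  have h3 : ({b, x, y} : Finset V).card = 3 := by
    rw [Finset.card_insert_of_notMem, Finset.card_insert_of_notMem, Finset.card_singleton]
    · simpa using hxy
    · simp only [Finset.mem_insert, Finset.mem_singleton]
      push_neg
      exact ⟨hbx, hby⟩
  rw [← h3]
  exact Finset.card_le_card hsub

lemma aux_dom_mem {V : Type*} (S : Finset V) (v : V) (f : V → ℤ) (hfv : f v = -1)
    (hfu : ∀ u, u ≠ v → f u = 1) (hv : v ∈ S)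
    (b x y : V) (hb : b ∈ S) (hx : x ∈ S) (hy : y ∈ S)
    (hbx : b ≠ x) (hby : b ≠ y) (hxy : x ≠ y) :
    1 ≤ ∑ u ∈ S, f u := by
  rw [aux_sum_pm_mem S v f hfv hfu hv]
  have h3 := aux_three S b x y hb hx hy hbx hby hxy
  omega

lemma aux_dom_not {V : Type*} (S : Finset V) (v : V) (f : V → ℤ)
    (hfu : ∀ u, u ≠ v → f u = 1) (hv : v ∉ S) (b : V) (hb : b ∈ S) :
    1 ≤ ∑ u ∈ S, f u := by
  rw [aux_sum_pm_not S v f hfu hv]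
  exact_mod_cast Finset.card_pos.mpr ⟨b, hb⟩

lemma aux_forced {V : Type*} (S : Finset V) (g : V → ℤ) (b : V)
    (hpm : ∀ u, g u = 1 ∨ g u = -1) (hb : 1 ≤ ∑ u ∈ S, g u) (hmem : b ∈ S)
    (hcard : S.card = 2) : g b = 1 := by
  classical
  rcases hpm b with h | h
  · exact h
  · exfalso
    have hsplit := Finset.sum_erase_add S g hmem
    have hle : ∑ u ∈ S.erase b, g u ≤ ((S.erase b).card : ℤ) := by
      calc ∑ u ∈ S.erase b, g u ≤ ∑ _u ∈ S.erase b, (1:ℤ) :=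
            Finset.sum_le_sum (fun u _ => by rcases hpm u with h'|h' <;> simp [h'])
        _ = _ := by simp
    have hce : (S.erase b).card = 1 := by rw [Finset.card_erase_of_mem hmem, hcard]
    rw [← hsplit, h] at hb
    rw [hce] at hle
    push_cast at hle
    linarith

lemma aux_tt {R : Type*} [AddGroup R] [Fintype R] (h : Odd (Fintype.card R)) (x : R)
    (hx : x + x = 0) : x = 0 := by
  have h2 : addOrderOf x ∣ 2 := addOrderOf_dvd_iff_nsmul_eq_zero.mpr (by simpa [two_nsmul] using hx)
  have hc : addOrderOf x ∣ Fintype.card R := addOrderOf_dvd_card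
  rcases (Nat.dvd_prime Nat.prime_two).mp h2 with h1 | h1
  · exact AddMonoid.addOrderOf_eq_one_iff.mp h1
  · exfalso
    rw [h1] at hc
    exact (Nat.not_even_iff_odd.mpr h) (even_iff_two_dvd.mpr hc)

/-- Theorem D(ii): for odd `n`, `γₛ(Γ(R)) = n - 1` iff `Γ(R)` is a disjoint union of
`(n-1)/2` copies of `P₂`, i.e. every vertex has degree exactly `1`. -/
theorem stmt_6 (R : Type*) [NonUnitalRing R] [Fintype R] (n : ℕ)
    (hcard : Fintype.card R = n) (hn : Odd n)
    (hnc : ∃ x y : R, x * y ≠ y * x)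
    (hz : Set.center R = {0}) :
    (commutingGraph R).signedDominationNumber = (n : ℤ) - 1 ↔
      ∀ v, (commutingGraph R).degree v = 1 := by
  obtain ⟨x0, y0, hxy0⟩ := hnc
  have hn1 : 1 ≤ n := by rw [← hcard]; exact Fintype.card_pos
  set G := commutingGraph R with hGdef
  have hmemz : ∀ x : R, x ∈ Set.center R ↔ x = 0 := by
    intro x; rw [hz]; exact Set.mem_singleton_iff
  have hvne : ∀ x : {x : R // x ∉ Set.center R}, (x : R) ≠ 0 :=
    fun x hx => x.2 ((hmemz _).mpr hx)
  have htt : ∀ x : R, x + x = 0 → x = 0 :=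
    fun x hx => aux_tt (by rw [hcard]; exact hn) x hx
  have hnegmem : ∀ x : {x : R // x ∉ Set.center R}, (-(x:R)) ∉ Set.center R := by
    intro x hx
    exact hvne x (neg_eq_zero.mp ((hmemz _).mp hx))
  let negv : {x : R // x ∉ Set.center R} → {x : R // x ∉ Set.center R} :=
    fun x => ⟨-(x:R), hnegmem x⟩
  have hne_negv : ∀ x, negv x ≠ x := by
    intro x h
    apply hvne x
    apply htt
    have h' : -(x:R) = x := congrArg Subtype.val h
    have h2 : (x:R) + x = -(x:R) + x := by rw [h']
    rw [h2, neg_add_cancel]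
  have hadj_negv : ∀ x, G.Adj x (negv x) := by
    intro x
    refine ⟨fun h => hne_negv x h.symm, ?_⟩
    show (x:R) * (-(x:R)) = (-(x:R)) * x
    rw [mul_neg, neg_mul]
  have hdegD : ∀ (b) (instN : Fintype (G.neighborSet b)),
      @SimpleGraph.degree _ G b instN = (Finset.univ.filter (fun u => G.Adj b u)).card := by
    intro b instN
    have h1 : @SimpleGraph.neighborFinset _ G b instN
        = Finset.univ.filter (fun u => G.Adj b u) := by
      ext u
      simp [SimpleGraph.mem_neighborFinset]
    exact congrArg Finset.card h1
  have hcardV : Fintype.card {x : R // x ∉ Set.center R} = n - 1 := by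
    have e : Fintype.card {x : R // x ∉ Set.center R} = Fintype.card {x : R // ¬ x = 0} :=
      Fintype.card_congr (Equiv.subtypeEquivRight (fun x => by rw [hmemz x]))
    rw [e, Fintype.card_subtype_compl, Fintype.card_subtype_eq, hcard]
  have hcardVI : ∀ (i : Fintype {x : R // x ∉ Set.center R}), @Fintype.card _ i = n - 1 := by
    intro i
    convert hcardV using 2
  constructor
  · -- forward direction
    intro hs v
    by_contra hdv
    have hdvD : ¬ (Finset.univ.filter (fun u => G.Adj v u)).card = 1 :=
      fun h => hdv ((hdegD v _).trans h)
    have hge1 : 1 ≤ (Finset.univ.filter (fun u => G.Adj v u)).card := by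
      refine Finset.card_pos.mpr ⟨negv v, ?_⟩
      simp [hadj_negv v]
    have hge2 : 1 < (Finset.univ.filter (fun u => G.Adj v u)).card := by omega
    obtain ⟨x, hxmem, y, hymem, hxy⟩ := Finset.one_lt_card.mp hge2
    have hvx : G.Adj v x := (Finset.mem_filter.mp hxmem).2
    have hvy : G.Adj v y := (Finset.mem_filter.mp hymem).2
    set f : {x : R // x ∉ Set.center R} → ℤ := (fun u => if u = v then -1 else 1) with hf
    have hfv : f v = -1 := by rw [hf]; simp
    have hfu : ∀ u, u ≠ v → f u = 1 := by intro u hu; rw [hf]; simp [hu]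
    have key : G.signedDominationNumber ≤ (n:ℤ) - 3 := by
      rw [SimpleGraph.signedDominationNumber]
      apply csInf_le
      · refine ⟨-(n:ℤ), ?_⟩
        rintro w ⟨g, hpm, -, rfl⟩
        have hbu : ∀ u, (-1:ℤ) ≤ g u := fun u => by rcases hpm u with h|h <;> simp [h]
        refine le_trans ?_ (Finset.sum_le_sum (fun u _ => hbu u))
        rw [Finset.sum_const, Finset.card_univ, hcardVI, nsmul_eq_mul,
          Nat.cast_sub hn1, Nat.cast_one]
        linarith
      · refine ⟨f, fun u => ?_, fun b => ?_, ?_⟩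
        · rw [hf]; dsimp only; split
          · exact Or.inr rfl
          · exact Or.inl rfl
        · -- domination condition at b
          by_cases hbv : b = v
          · subst hbv
            refine aux_dom_mem _ b f hfv hfu ?_ b x y ?_ ?_ ?_ hvx.ne hvy.ne hxy
            · simp only [Finset.mem_filter, Finset.mem_univ, true_and]
              exact Or.inr trivial
            · simp only [Finset.mem_filter, Finset.mem_univ, true_and]
              exact Or.inr trivial
            · simp only [Finset.mem_filter, Finset.mem_univ, true_and]
              exact Or.inl hvx
            · simp only [Finset.mem_filter, Finset.mem_univ, true_and]
              exact Or.inl hvy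
          · by_cases hadjbv : G.Adj b v
            · by_cases hbneg : (b:R) = -(v:R)
              · -- b = -v : use the triple b, negv b, x' where x' is a neighbour of v
                -- different from negv v
                obtain ⟨u', hu'mem, hu'ne⟩ := Finset.exists_mem_ne hge2 (negv v)
                have hu'adj : G.Adj v u' := (Finset.mem_filter.mp hu'mem).2
                have hucoe : (u':R) ≠ -(v:R) := fun h => hu'ne (Subtype.ext h)
                have hub : u' ≠ b := fun h => hucoe (by rw [h, hbneg])
                have hadj_bu : G.Adj b u' := by
                  refine ⟨Ne.symm hub, ?_⟩
                  show (b:R) * u' = (u':R) * b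
                  rw [hbneg, neg_mul, mul_neg, hu'adj.2]
                have hunb : negv b ≠ u' := by
                  intro h
                  apply hu'adj.1
                  apply Subtype.ext
                  have hcoe : -(b:R) = u' := congrArg Subtype.val h
                  rw [hbneg, neg_neg] at hcoe
                  exact hcoe
                refine aux_dom_mem _ v f hfv hfu ?_ b (negv b) u' ?_ ?_ ?_
                  (Ne.symm (hne_negv b)) (Ne.symm hub) hunb
                · simp only [Finset.mem_filter, Finset.mem_univ, true_and]
                  exact Or.inl hadjbv
                · simp only [Finset.mem_filter, Finset.mem_univ, true_and]
                  exact Or.inr trivial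
                · simp only [Finset.mem_filter, Finset.mem_univ, true_and]
                  exact Or.inl (hadj_negv b)
                · simp only [Finset.mem_filter, Finset.mem_univ, true_and]
                  exact Or.inl hadj_bu
              · -- b ≠ -v : use the triple b, v, negv v
                have hbnv : b ≠ negv v := fun h => hbneg (congrArg Subtype.val h)
                have hadj_bnegv : G.Adj b (negv v) := by
                  refine ⟨hbnv, ?_⟩
                  show (b:R) * (-(v:R)) = (-(v:R)) * b
                  rw [mul_neg, neg_mul, hadjbv.2]
                refine aux_dom_mem _ v f hfv hfu ?_ b v (negv v) ?_ ?_ ?_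
                  hbv hbnv (Ne.symm (hne_negv v))
                · simp only [Finset.mem_filter, Finset.mem_univ, true_and]
                  exact Or.inl hadjbv
                · simp only [Finset.mem_filter, Finset.mem_univ, true_and]
                  exact Or.inr trivial
                · simp only [Finset.mem_filter, Finset.mem_univ, true_and]
                  exact Or.inl hadjbv
                · simp only [Finset.mem_filter, Finset.mem_univ, true_and]
                  exact Or.inl hadj_bnegv
            · -- v is not in the closed neighbourhood of b
              refine aux_dom_not _ v f hfu ?_ b ?_
              · intro hmem
                simp only [Finset.mem_filter, Finset.mem_univ, true_and] at hmem
                exact hmem.elim hadjbv (fun h => hbv h.symm)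
              · simp only [Finset.mem_filter, Finset.mem_univ, true_and]
                exact Or.inr trivial
        · -- total weight
          refine Eq.trans ?_ (aux_sum_pm_mem _ v f hfv hfu (Finset.mem_univ v)).symm
          rw [Finset.card_univ, hcardVI, Nat.cast_sub hn1, Nat.cast_one]
          ring
    rw [hs] at key
    linarith
  · -- reverse direction
    intro hdeg1
    have hD1 : ∀ b, (Finset.univ.filter (fun u => G.Adj b u)).card = 1 :=
      fun b => (hdegD b _).symm.trans (hdeg1 b)
    have hNclD : ∀ b (inst : DecidablePred (fun u => G.Adj b u ∨ u = b)),
        (@Finset.filter _ _ inst Finset.univ).card = 2 := by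
      intro b inst
      have h1 : @Finset.filter _ (fun u => G.Adj b u ∨ u = b) inst Finset.univ
          = insert b (Finset.univ.filter (fun u => G.Adj b u)) := by
        ext u
        simp only [Finset.mem_filter, Finset.mem_univ, true_and, Finset.mem_insert]
        tauto
      rw [h1, Finset.card_insert_of_notMem (by simp), hD1 b]
    rw [SimpleGraph.signedDominationNumber]
    apply IsLeast.csInf_eq
    constructor
    · refine ⟨fun _ => 1, fun _ => Or.inl rfl, fun b => ?_, ?_⟩
      · rw [Finset.sum_const, hNclD b]
        norm_num
      · rw [Finset.sum_const, Finset.card_univ, hcardVI, nsmul_eq_mul, mul_one,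
          Nat.cast_sub hn1, Nat.cast_one]
    · rintro w ⟨g, hpm, hdom, rfl⟩
      have hg1 : ∀ b, g b = 1 := by
        intro b
        refine aux_forced _ g b hpm (hdom b) ?_ (hNclD b _)
        simp only [Finset.mem_filter, Finset.mem_univ, true_and]
        exact Or.inr trivial
      rw [Finset.sum_congr rfl (fun v _ => hg1 v), Finset.sum_const, Finset.card_univ,
        hcardVI, nsmul_eq_mul, mul_one, Nat.cast_sub hn1, Nat.cast_one]

end
end

section
/- Let R be a finite non-commutative ring with Z(R) = {0}. Then γ(Γ(R)) ≥ 3. -/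
open scoped Classical

noncomputable section

/-- `γ(Γ(R)) ≥ 3` for a finite non-commutative ring with trivial center. -/
theorem stmt_9 (R : Type*) [NonUnitalRing R] [Fintype R]
    (hnc : ∃ x y : R, x * y ≠ y * x)
    (hz : Set.center R = {0}) :
    3 ≤ (commutingGraph R).dominationNumber := by
  -- a noncentral element exists
  obtain ⟨x, y, hxy⟩ := hnc
  have hx : x ∉ Set.center R := by
    intro hx
    rw [hz, Set.mem_singleton_iff] at hx
    subst hx
    exact hxy (by rw [zero_mul, mul_zero])
  have hcent : ∀ a : R, (∀ g : R, g * a = a * g) → a ∈ Set.center R := by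
    intro a h
    exact Semigroup.mem_center_iff.mpr h
  have hne : {n | ∃ D : Finset {x : R // x ∉ Set.center R},
      (commutingGraph R).IsDominatingSet D ∧ D.card = n}.Nonempty :=
    ⟨_, Finset.univ, fun v hv => absurd (Finset.mem_univ v) hv, rfl⟩
  apply le_csInf hne
  rintro n ⟨D, hD, rfl⟩
  by_contra hlt
  push_neg at hlt
  interval_cases h : D.card
  · -- card 0
    rw [Finset.card_eq_zero] at h
    subst h
    obtain ⟨u, hu, -⟩ := hD ⟨x, hx⟩ (Finset.notMem_empty _)
    exact absurd hu (Finset.notMem_empty _)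
  · -- card 1
    rw [Finset.card_eq_one] at h
    obtain ⟨v, rfl⟩ := h
    apply v.2
    apply hcent
    intro g
    by_cases hg : g ∈ Set.center R
    · rw [hz, Set.mem_singleton_iff] at hg
      subst hg
      rw [zero_mul, mul_zero]
    · by_cases hgv : (⟨g, hg⟩ : {x : R // x ∉ Set.center R}) ∈ ({v} : Finset _)
      · rw [Finset.mem_singleton] at hgv
        have : g = (v : R) := congrArg Subtype.val hgv
        rw [this]
      · obtain ⟨u, hu, hadj⟩ := hD ⟨g, hg⟩ hgv
        rw [Finset.mem_singleton] at hu
        subst hu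
        exact hadj.2.symm
  · -- card 2
    rw [Finset.card_eq_two] at h
    obtain ⟨v, w, hvw, rfl⟩ := h
    have cov : ∀ g : R, g * (v : R) = (v : R) * g ∨ g * (w : R) = (w : R) * g := by
      intro g
      by_cases hg : g ∈ Set.center R
      · rw [hz, Set.mem_singleton_iff] at hg
        subst hg
        left; rw [zero_mul, mul_zero]
      · by_cases hgv : (⟨g, hg⟩ : {x : R // x ∉ Set.center R}) ∈ ({v, w} : Finset _)
        · rw [Finset.mem_insert, Finset.mem_singleton] at hgv
          rcases hgv with hgv | hgv
          · left
            have : g = (v : R) := congrArg Subtype.val hgv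
            rw [this]
          · right
            have : g = (w : R) := congrArg Subtype.val hgv
            rw [this]
        · obtain ⟨u, hu, hadj⟩ := hD ⟨g, hg⟩ hgv
          rw [Finset.mem_insert, Finset.mem_singleton] at hu
          rcases hu with hu | hu <;> subst hu
          · left; exact hadj.2.symm
          · right; exact hadj.2.symm
    by_cases ha : ∀ g : R, g * (v : R) = (v : R) * g
    · exact v.2 (hcent _ ha)
    by_cases hb : ∀ g : R, g * (w : R) = (w : R) * g
    · exact w.2 (hcent _ hb)
    push_neg at ha hb
    obtain ⟨s, hs⟩ := ha
    obtain ⟨t, ht⟩ := hb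
    have hsw : s * (w : R) = (w : R) * s := (cov s).resolve_left hs
    have htv : t * (v : R) = (v : R) * t := (cov t).resolve_right ht
    rcases cov (s + t) with hst | hst
    · rw [add_mul, mul_add, htv] at hst
      exact hs (add_right_cancel hst)
    · rw [add_mul, mul_add, hsw] at hst
      exact ht (add_left_cancel hst)

end
end

section
/- Let R be a finite non-commutative ring of order n with Z(R) = {0}. Then γ_s(Γ̄(R)) ≠ n - 1 and γ_s(Γ̄(R)) ≠ n - 5. -/
open scoped Classical

noncomputable section

section SdnAux

variable {R : Type*} [NonUnitalRing R] [Fintype R]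

def CFx (v : R) : Finset R := Finset.univ.filter (fun x => x * v = v * x)
def DFx (v : R) : Finset R := Finset.univ.filter (fun x => ¬ x * v = v * x)

lemma mem_CFx {v x : R} : x ∈ CFx v ↔ x * v = v * x := by simp [CFx]
lemma mem_DFx {v x : R} : x ∈ DFx v ↔ ¬ x * v = v * x := by simp [DFx]

lemma CFx_card_add_DFx_card (v : R) :
    (CFx v).card + (DFx v).card = Fintype.card R := by
  simpa [CFx, DFx] using Finset.card_filter_add_card_filter_not
    (s := (Finset.univ : Finset R)) (fun x => x * v = v * x)

lemma sub_mem_CFx {v x y : R} (hx : x ∈ CFx v) (hy : y ∈ CFx v) : x - y ∈ CFx v := by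
  rw [mem_CFx] at *; rw [sub_mul, mul_sub, hx, hy]

lemma add_mem_CFx {v x y : R} (hx : x ∈ CFx v) (hy : y ∈ CFx v) : x + y ∈ CFx v := by
  rw [mem_CFx] at *; rw [add_mul, mul_add, hx, hy]

lemma zero_mem_CFx {v : R} : (0:R) ∈ CFx v := by simp [mem_CFx]
lemma self_mem_CFx {v : R} : v ∈ CFx v := by rw [mem_CFx]

lemma CFx_card_le_DFx_card {v u0 : R} (hu0 : ¬ u0 * v = v * u0) :
    (CFx v).card ≤ (DFx v).card := by
  apply Finset.card_le_card_of_injOn (fun x => x + u0)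
  · intro x hx
    rw [Finset.mem_coe, mem_CFx] at hx
    rw [Finset.mem_coe, mem_DFx]
    intro h
    apply hu0
    rw [add_mul, mul_add, hx] at h
    exact add_left_cancel h
  · intro a _ b _ h
    exact add_right_cancel h

lemma two_le_CFx_card {v : R} (hv : v ≠ 0) : 2 ≤ (CFx v).card := by
  have hsub : ({0, v} : Finset R) ⊆ CFx v := by
    intro x hx
    rcases Finset.mem_insert.1 hx with h | h
    · subst h; exact zero_mem_CFx
    · rw [Finset.mem_singleton] at h; subst h; exact self_mem_CFx
  have hcard : ({0, v} : Finset R).card = 2 := by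
    rw [Finset.card_insert_of_notMem (by simpa using (Ne.symm hv)), Finset.card_singleton]
  calc 2 = ({0, v} : Finset R).card := hcard.symm
    _ ≤ _ := Finset.card_le_card hsub

lemma card_le_two_mul_DFx {v : R} (hv : ∃ u, ¬ u * v = v * u) :
    Fintype.card R ≤ 2 * (DFx v).card := by
  obtain ⟨u0, hu0⟩ := hv
  have h1 := CFx_card_le_DFx_card hu0
  have h2 := CFx_card_add_DFx_card v
  omega

lemma two_le_DFx_card {v : R} (hv : ∃ u, ¬ u * v = v * u) (hv0 : v ≠ 0) :
    2 ≤ (DFx v).card :=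
  le_trans (two_le_CFx_card hv0) (CFx_card_le_DFx_card hv.choose_spec)

lemma CFx_mul_le (v w : R) (h : ∀ x, x ∈ CFx v → x ∈ CFx w → x = 0) :
    (CFx v).card * (CFx w).card ≤ Fintype.card R := by
  have hinj := Finset.card_le_card_of_injOn (s := CFx v ×ˢ CFx w)
    (t := (Finset.univ : Finset R)) (fun p => p.1 + p.2) (fun p _ => Finset.mem_univ _) ?_
  · rwa [Finset.card_product, Finset.card_univ] at hinj
  · rintro ⟨p1, p2⟩ hp ⟨q1, q2⟩ hq hpq
    simp only [Finset.coe_product, Set.mem_prod, Finset.mem_coe] at hp hq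
    simp only at hpq
    have h1 : p1 - q1 ∈ CFx v := sub_mem_CFx hp.1 hq.1
    have h2' : p1 - q1 ∈ CFx w := by
      have he : p1 - q1 = q2 - p2 := by
        rw [sub_eq_sub_iff_add_eq_add, hpq]; exact add_comm _ _
      rw [he]; exact sub_mem_CFx hq.2 hp.2
    have h0 := h _ h1 h2'
    have hp1 : p1 = q1 := by rwa [sub_eq_zero] at h0
    have hp2 : p2 = q2 := by
      rw [hp1] at hpq; exact add_left_cancel hpq
    simp [hp1, hp2]

lemma CFx_card_dvd (v : R) : (CFx v).card ∣ Fintype.card R := by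
  let H : AddSubgroup R :=
    { carrier := {x : R | x * v = v * x}
      zero_mem' := by simp
      add_mem' := by
        intro a b ha hb
        simp only [Set.mem_setOf_eq] at *
        rw [add_mul, mul_add, ha, hb]
      neg_mem' := by
        intro a ha
        simp only [Set.mem_setOf_eq] at *
        rw [neg_mul, mul_neg, ha] }
  have h1 : Nat.card H = (CFx v).card := by
    rw [Nat.card_eq_fintype_card]
    exact Fintype.card_subtype _
  have h2 := AddSubgroup.card_addSubgroup_dvd_card H
  rwa [h1, Nat.card_eq_fintype_card] at h2

lemma comm_of_card_eq_two_mul_prime {p : ℕ} (hp : p.Prime) (hp2 : p ≠ 2)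
    (hc : Fintype.card R = 2 * p) (x y : R) : x * y = y * x := by
  haveI : Fact (Nat.Prime 2) := ⟨Nat.prime_two⟩
  haveI : Fact p.Prime := ⟨hp⟩
  obtain ⟨a, ha⟩ := exists_prime_addOrderOf_dvd_card (G := R) 2
    (by rw [hc]; exact Dvd.intro p rfl)
  obtain ⟨b, hb⟩ := exists_prime_addOrderOf_dvd_card (G := R) p
    (by rw [hc]; exact Dvd.intro_left 2 rfl)
  have hord : addOrderOf (a + b) = 2 * p := by
    rw [(AddCommute.all a b).addOrderOf_add_eq_mul_addOrderOf_of_coprime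
      (by rw [ha, hb]; exact (Nat.coprime_primes Nat.prime_two hp).2 (fun h => hp2 h.symm)),
      ha, hb]
  have htop : AddSubgroup.zmultiples (a + b) = ⊤ :=
    AddSubgroup.eq_top_of_card_eq _
      (by rw [Nat.card_zmultiples, hord, Nat.card_eq_fintype_card, hc])
  have hxm : x ∈ AddSubgroup.zmultiples (a + b) := by rw [htop]; trivial
  have hym : y ∈ AddSubgroup.zmultiples (a + b) := by rw [htop]; trivial
  obtain ⟨k, hk⟩ := AddSubgroup.mem_zmultiples_iff.1 hxm
  obtain ⟨l, hl⟩ := AddSubgroup.mem_zmultiples_iff.1 hym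
  rw [← hk, ← hl, smul_mul_assoc, smul_mul_assoc, mul_smul_comm, mul_smul_comm, smul_comm]


lemma noncomm_of_card_four (hz : Set.center R = {0}) (h4 : Fintype.card R = 4)
    {x y : R} (hx : x ≠ 0) (hy : y ≠ 0) (hxy : x ≠ y) : ¬ x * y = y * x := by
  intro hcomm
  have key : ∃ z : R, ({0, x, y, z} : Finset R).card = 4 ∧ ({0, x, y, z} : Finset R) ⊆ CFx x := by
    by_cases hs : x + y = 0
    · refine ⟨x + x, ?_, ?_⟩
      · have hxx0 : x + x ≠ 0 := by
          intro h0
          exact hxy (add_left_cancel (hs.trans h0.symm)).symm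
        have hxxy : x + x ≠ y := by
          intro hyy
          have h3 : x + (x + x) = 0 := by rw [hyy]; exact hs
          have h3' : (3 : ℕ) • x = 0 := by
            rw [show (3:ℕ) = 2 + 1 from rfl, add_nsmul, two_nsmul, one_nsmul]
            rw [add_comm] at h3
            exact h3
          have hd3 : addOrderOf x ∣ 3 := addOrderOf_dvd_of_nsmul_eq_zero h3'
          have hd4 : addOrderOf x ∣ 4 := h4 ▸ addOrderOf_dvd_card
          have h1 : addOrderOf x = 1 := by
            have := Nat.dvd_gcd hd3 hd4
            simpa using this
          exact hx (AddMonoid.addOrderOf_eq_one_iff.1 h1)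
        have hxxx : x + x ≠ x := fun h => hx (by simpa using h)
        rw [Finset.card_insert_of_notMem (by simp [hx.symm, hy.symm, hxx0.symm]),
          Finset.card_insert_of_notMem (by simp [hxy, hxxx.symm]),
          Finset.card_insert_of_notMem (by simp [hxxy.symm]), Finset.card_singleton]
      · intro u hu
        simp only [Finset.mem_insert, Finset.mem_singleton] at hu
        rcases hu with rfl | rfl | rfl | rfl
        · simp [mem_CFx]
        · rw [mem_CFx]
        · rw [mem_CFx]; exact hcomm.symm
        · rw [mem_CFx, add_mul, mul_add]
    · refine ⟨x + y, ?_, ?_⟩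
      · have h1 : x + y ≠ x := fun h => hy (by simpa using h)
        have h2 : x + y ≠ y := fun h => hx (by simpa using h)
        rw [Finset.card_insert_of_notMem (by simp [hx.symm, hy.symm, (Ne.symm hs)]),
          Finset.card_insert_of_notMem (by simp [hxy, h1.symm]),
          Finset.card_insert_of_notMem (by simp [h2.symm]), Finset.card_singleton]
      · intro u hu
        simp only [Finset.mem_insert, Finset.mem_singleton] at hu
        rcases hu with rfl | rfl | rfl | rfl
        · simp [mem_CFx]
        · rw [mem_CFx]
        · rw [mem_CFx]; exact hcomm.symm
        · rw [mem_CFx, add_mul, mul_add, hcomm]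
  obtain ⟨z, hcz, hsz⟩ := key
  have hCF : CFx x = Finset.univ := by
    apply Finset.eq_univ_of_card
    have h1 : 4 ≤ (CFx x).card := hcz ▸ Finset.card_le_card hsz
    have h2 : (CFx x).card ≤ 4 := h4 ▸ Finset.card_le_univ _
    omega
  have hxc : x ∈ Set.center R := Semigroup.mem_center_iff.2
    (fun g => mem_CFx.1 (hCF ▸ Finset.mem_univ g))
  rw [hz] at hxc
  exact hx hxc

lemma CFx_comm_of_card_four {w0 : R} (hw0 : w0 ≠ 0) (h4 : (CFx w0).card = 4) :
    ∀ p ∈ CFx w0, ∀ q ∈ CFx w0, p * q = q * p := by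
  intro p hp q hq
  by_cases hp0 : p = 0; · simp [hp0]
  by_cases hq0 : q = 0; · simp [hq0]
  by_cases hpq : p = q; · rw [hpq]
  by_cases hpw : p = w0
  · subst hpw; exact (mem_CFx.1 hq).symm
  by_cases hqw : q = w0
  · subst hqw; exact mem_CFx.1 hp
  have hsub2 : ({0, w0, p, q} : Finset R) ⊆ CFx w0 := by
    intro u hu
    simp only [Finset.mem_insert, Finset.mem_singleton] at hu
    rcases hu with rfl | rfl | rfl | rfl
    · simp [mem_CFx]
    · rw [mem_CFx]
    · exact hp
    · exact hq
  have hc4 : ({0, w0, p, q} : Finset R).card = 4 := by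
    rw [Finset.card_insert_of_notMem (by simp [hw0.symm, Ne.symm hp0, Ne.symm hq0]),
      Finset.card_insert_of_notMem (by simp [Ne.symm hpw, Ne.symm hqw]),
      Finset.card_insert_of_notMem (by simp [hpq]), Finset.card_singleton]
  have heq : CFx w0 = ({0, w0, p, q} : Finset R) :=
    (Finset.eq_of_subset_of_card_le hsub2 (by omega)).symm
  have hsum : p + q ∈ CFx w0 := by
    rw [mem_CFx] at hp hq ⊢; rw [add_mul, mul_add, hp, hq]
  rw [heq] at hsum
  simp only [Finset.mem_insert, Finset.mem_singleton] at hsum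
  rcases hsum with h | h | h | h
  · have : q = -p := eq_neg_of_add_eq_zero_right h
    rw [this, mul_neg, neg_mul]
  · have hqe : q = w0 - p := eq_sub_of_add_eq' h
    rw [hqe, mul_sub, sub_mul, mem_CFx.1 hp]
  · exact absurd (add_eq_left.1 h) hq0
  · exact absurd (add_eq_right.1 h) hp0


abbrev Vx (R : Type*) [NonUnitalRing R] := {x : R // x ∉ Set.center R}

lemma cg_adj {v u : Vx R} : (commutingGraph R).Adj v u ↔ (v ≠ u ∧ (v:R) * u = (u:R) * v) :=
  Iff.rfl

def Nbx (v : Vx R) : Finset (Vx R) :=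
  Finset.univ.filter (fun u => ((commutingGraph R)ᶜ).Adj v u ∨ u = v)

lemma mem_Nbx {v u : Vx R} : u ∈ Nbx v ↔ (¬ (u:R) * v = (v:R) * u) ∨ u = v := by
  simp only [Nbx, Finset.mem_filter, Finset.mem_univ, true_and, SimpleGraph.compl_adj, cg_adj]
  constructor
  · rintro (⟨hne, hn⟩ | he)
    · left; intro hc; exact hn ⟨hne, hc.symm⟩
    · right; exact he
  · rintro (hnc | he)
    · left
      refine ⟨fun h => hnc (by rw [← h]), ?_⟩
      rintro ⟨-, hc⟩
      exact hnc hc.symm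
    · right; exact he

lemma vx_ne_zero (hz : Set.center R = {0}) (v : Vx R) : (v:R) ≠ 0 :=
  fun h0 => v.2 (by have : ((v:R)) ∈ ({0} : Set R) := by simp [h0]
                    rwa [← hz] at this)

lemma vx_exists_noncomm (v : Vx R) : ∃ u : R, ¬ u * (v:R) = (v:R) * u := by
  by_contra hcon
  push_neg at hcon
  exact v.2 (Semigroup.mem_center_iff.2 hcon)

lemma Nbx_card (v : Vx R) : (Nbx v).card = (DFx (v:R)).card + 1 := by
  have hco : Nbx v = insert v (Finset.univ.filter (fun u : Vx R => ¬ (u:R) * v = (v:R) * u)) := by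
    ext u
    rw [mem_Nbx, Finset.mem_insert, Finset.mem_filter]
    simp only [Finset.mem_univ, true_and]
    tauto
  rw [hco, Finset.card_insert_of_notMem (by simp)]
  congr 1
  refine Finset.card_bij (fun u _ => (u : R)) ?_ ?_ ?_
  · intro u hu
    rw [Finset.mem_filter] at hu
    rw [mem_DFx]
    exact hu.2
  · intro u₁ h₁ u₂ h₂ h
    exact Subtype.ext h
  · intro xx hxx
    rw [mem_DFx] at hxx
    have hnc : xx ∉ Set.center R := by
      intro hc
      exact hxx ((Semigroup.mem_center_iff.1 hc) (v:R)).symm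
    exact ⟨⟨xx, hnc⟩, by rw [Finset.mem_filter]; exact ⟨Finset.mem_univ _, hxx⟩, rfl⟩

def icount {α : Type*} (T S : Finset α) : ℕ := (T.filter (fun u => u ∈ S)).card

lemma icount_le_of {α : Type*} {T S : Finset α} {U : Finset α}
    (h : ∀ u, u ∈ T → u ∈ S → u ∈ U) : icount T S ≤ U.card := by
  apply Finset.card_le_card
  intro u hu
  rw [Finset.mem_filter] at hu
  exact h u hu.1 hu.2

lemma icount_le_right {α : Type*} (T S : Finset α) : icount T S ≤ S.card :=
  icount_le_of (fun u _ hu => hu)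

lemma sum_pm {α : Type*} (T S : Finset α) [inst : ∀ u : α, Decidable (u ∈ S)] :
    ∑ u ∈ T, (if u ∈ S then (-1:ℤ) else 1) = T.card - 2 * icount T S := by
  classical
  rw [Finset.sum_ite, Finset.sum_const, Finset.sum_const]
  have e1 : Finset.filter (fun u => u ∈ S) T = Finset.filter (fun u => u ∈ S) T := by
    ext u; simp
  have hicount : icount T S = (Finset.filter (fun u => u ∈ S) T).card := by
    unfold icount; congr 1; ext u; simp [Finset.mem_filter]
  have e2 : Finset.filter (fun u => ¬ u ∈ S) T = T \ Finset.filter (fun u => u ∈ S) T := by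
    ext u; simp [Finset.mem_filter, Finset.mem_sdiff]; tauto
  rw [e2]
  have h1 : (T \ Finset.filter (fun u => u ∈ S) T).card
      = T.card - (Finset.filter (fun u => u ∈ S) T).card :=
    Finset.card_sdiff_of_subset (Finset.filter_subset _ _)
  have h2 : (Finset.filter (fun u => u ∈ S) T).card ≤ T.card :=
    Finset.card_le_card (Finset.filter_subset _ _)
  rw [h1, hicount]
  simp only [nsmul_eq_mul, smul_eq_mul]
  push_cast [Nat.cast_sub h2]
  ring

lemma weight_mem (S : Finset (Vx R))
    (hS : ∀ v : Vx R, 2 * icount (Nbx v) S + 1 ≤ (Nbx v).card) :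
    ∃ f : Vx R → ℤ, (∀ v, f v = 1 ∨ f v = -1) ∧
      (∀ v : Vx R, 1 ≤ ∑ u ∈ Finset.univ.filter
          (fun u => ((commutingGraph R)ᶜ).Adj v u ∨ u = v), f u) ∧
      (Fintype.card (Vx R) : ℤ) - 2 * S.card = ∑ v, f v := by
  refine ⟨fun u => if u ∈ S then -1 else 1,
    fun v => by by_cases h : v ∈ S <;> simp [h], ?_, ?_⟩
  · intro v
    have he : Finset.univ.filter (fun u => ((commutingGraph R)ᶜ).Adj v u ∨ u = v) = Nbx v := rfl
    rw [he]
    show 1 ≤ ∑ u ∈ Nbx v, (if u ∈ S then (-1:ℤ) else 1)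
    rw [sum_pm]
    have h1 := hS v
    omega
  · show _ = ∑ v : Vx R, (if v ∈ S then (-1:ℤ) else 1)
    rw [sum_pm]
    have h1 : icount Finset.univ S = S.card := by
      unfold icount
      congr 1
      ext u
      simp
    rw [h1, Finset.card_univ]

lemma card_triple_le {α : Type*} [DecidableEq α] (a b c : α) :
    ({a, b, c} : Finset α).card ≤ 3 := by
  apply le_trans (Finset.card_insert_le _ _)
  have h := Finset.card_insert_le b ({c} : Finset α)
  simp only [Finset.card_singleton] at h
  omega

lemma valid_of_DF_big (hbig : ∀ v : Vx R, 6 ≤ (DFx (v:R)).card)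
    (S : Finset (Vx R)) (hS3 : S.card ≤ 3) :
    ∀ v : Vx R, 2 * icount (Nbx v) S + 1 ≤ (Nbx v).card := by
  intro v
  have h1 : icount (Nbx v) S ≤ 3 := le_trans (icount_le_right _ _) hS3
  have h2 := Nbx_card v
  have h3 := hbig v
  omega



lemma triple_valid (hz : Set.center R = {0}) (h8 : 8 ≤ Fintype.card R)
    (a b c : Vx R)
    (hcomm : ∀ u w : Vx R, u ∈ ({a,b,c} : Finset (Vx R)) → w ∈ ({a,b,c} : Finset (Vx R)) →
      (u:R) * w = (w:R) * u)
    (hbig : ∀ v : Vx R, ¬ (a:R) * v = (v:R) * a → ¬ (b:R) * v = (v:R) * b →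
      ¬ (c:R) * v = (v:R) * c → 6 ≤ (DFx (v:R)).card) :
    ∀ v : Vx R, 2 * icount (Nbx v) ({a,b,c} : Finset (Vx R)) + 1 ≤ (Nbx v).card := by
  intro v
  have hvne := vx_ne_zero hz v
  have hvex := vx_exists_noncomm v
  have hDF2 : 2 ≤ (DFx (v:R)).card := two_le_DFx_card hvex hvne
  have hNb := Nbx_card v
  by_cases hv : v ∈ ({a,b,c} : Finset (Vx R))
  · have h1 : icount (Nbx v) ({a,b,c} : Finset (Vx R)) ≤ ({v} : Finset (Vx R)).card := by
      apply icount_le_of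
      intro u hu1 hu2
      rw [Finset.mem_singleton]
      rcases mem_Nbx.1 hu1 with hno | he
      · exact absurd (hcomm u v hu2 hv) hno
      · exact he
    rw [Finset.card_singleton] at h1
    omega
  · by_cases h1 : ∃ u ∈ ({a,b,c} : Finset (Vx R)), (u:R) * v = (v:R) * u
    · obtain ⟨u, hu, hcu⟩ := h1
      have hic : icount (Nbx v) ({a,b,c} : Finset (Vx R))
          ≤ (({a,b,c} : Finset (Vx R)).erase u).card := by
        apply icount_le_of
        intro w hw1 hw2
        rw [Finset.mem_erase]
        refine ⟨?_, hw2⟩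
        intro hwu
        rcases mem_Nbx.1 hw1 with hno | he
        · rw [hwu] at hno; exact hno hcu
        · rw [he] at hw2; exact hv hw2
      have h3 : ({a,b,c} : Finset (Vx R)).card ≤ 3 := card_triple_le a b c
      rw [Finset.card_erase_of_mem hu] at hic
      have hhalf := card_le_two_mul_DFx hvex
      omega
    · push_neg at h1
      have hb := hbig v (h1 a (by simp)) (h1 b (by simp)) (h1 c (by simp))
      have h3 : icount (Nbx v) ({a,b,c} : Finset (Vx R)) ≤ 3 :=
        le_trans (icount_le_right _ _) (card_triple_le a b c)
      omega

end SdnAux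

/-- `γₛ(Γ̄(R)) ∉ {n - 1, n - 5}`. -/
theorem stmt_17 (R : Type*) [NonUnitalRing R] [Fintype R] (n : ℕ)
    (hcard : Fintype.card R = n)
    (hnc : ∃ x y : R, x * y ≠ y * x)
    (hz : Set.center R = {0}) :
    ((commutingGraph R)ᶜ).signedDominationNumber ≠ (n : ℤ) - 1 ∧
      ((commutingGraph R)ᶜ).signedDominationNumber ≠ (n : ℤ) - 5 := by
  classical
  subst hcard
  obtain ⟨x, y, hxy⟩ := hnc
  have hx0 : x ≠ 0 := fun h => hxy (by rw [h, zero_mul, mul_zero])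
  have hy0 : y ≠ 0 := fun h => hxy (by rw [h, zero_mul, mul_zero])
  have hxyne : x ≠ y := fun h => hxy (by rw [h])
  have hxnc : x ∉ Set.center R := fun hc => hxy ((Semigroup.mem_center_iff.1 hc) y).symm
  have hxyadd : x + y ≠ 0 := by
    intro h
    have hyx : y = -x := eq_neg_of_add_eq_zero_right h
    apply hxy
    rw [hyx, mul_neg, neg_mul]
  have hn4 : 4 ≤ Fintype.card R := by
    have h1 : x + y ≠ x := fun h => hy0 (by simpa using h)
    have h2 : x + y ≠ y := fun h => hx0 (by simpa using h)
    have hcard4 : ({0, x, y, x + y} : Finset R).card = 4 := by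
      rw [Finset.card_insert_of_notMem (by simp [hx0.symm, hy0.symm, (Ne.symm hxyadd)]),
        Finset.card_insert_of_notMem (by simp [hxyne, h1.symm]),
        Finset.card_insert_of_notMem (by simp [h2.symm]), Finset.card_singleton]
    have hle := Finset.card_le_univ ({0, x, y, x + y} : Finset R)
    rw [hcard4] at hle
    exact hle
  have hVcard : Fintype.card (Vx R) = Fintype.card R - 1 := by
    have h1 : Fintype.card {z : R // z ∈ Set.center R} = 1 := by
      rw [Fintype.card_subtype]
      have he : Finset.univ.filter (fun z : R => z ∈ Set.center R) = {0} := by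
        ext z; simp [hz]
      rw [he, Finset.card_singleton]
    have h2 := Fintype.card_subtype_compl (fun z : R => z ∈ Set.center R)
    rw [h1] at h2
    exact h2
  have hcast : ((Fintype.card (Vx R) : ℤ)) = (Fintype.card R : ℤ) - 1 := by
    rw [hVcard, Nat.cast_sub (by omega : 1 ≤ Fintype.card R)]
    norm_num
  obtain ⟨W, hW, hWin, hWout⟩ :
      ∃ S : Set ℤ, ((commutingGraph R)ᶜ).signedDominationNumber = sInf S ∧
        (∀ (w : ℤ) (f : Vx R → ℤ), (∀ v, f v = 1 ∨ f v = -1) →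
          (∀ v : Vx R, 1 ≤ ∑ u ∈ Nbx v, f u) → w = ∑ v, f v → w ∈ S) ∧
        (∀ w ∈ S, ∃ f : Vx R → ℤ, (∀ v, f v = 1 ∨ f v = -1) ∧
          (∀ v : Vx R, 1 ≤ ∑ u ∈ Nbx v, f u) ∧ w = ∑ v, f v) := by
    refine ⟨_, rfl, ?_, ?_⟩
    · intro w f h1 h2 h3
      refine ⟨f, h1, fun v => ?_, h3⟩
      refine le_trans (h2 v) (le_of_eq (Finset.sum_congr ?_ (fun _ _ => rfl)))
      ext u
      simp [Nbx, Finset.mem_filter]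
    · intro w hw
      obtain ⟨f, h1, h2, h3⟩ := hw
      refine ⟨f, h1, fun v => ?_, h3⟩
      refine le_trans (h2 v) (le_of_eq (Finset.sum_congr ?_ (fun _ _ => rfl)))
      ext u
      simp [Nbx, Finset.mem_filter]
  rw [hW]
  have hbdd : BddBelow W := by
    refine ⟨-(Fintype.card (Vx R) : ℤ), ?_⟩
    intro w hw
    obtain ⟨f, hf1, -, rfl⟩ := hWout w hw
    have hle : ∀ v ∈ (Finset.univ : Finset (Vx R)), (-1:ℤ) ≤ f v := by
      intro v _
      rcases hf1 v with h | h <;> rw [h] <;> norm_num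
    have hs := Finset.sum_le_sum hle
    rw [Finset.sum_const, Finset.card_univ] at hs
    simpa using hs
  let a0 : Vx R := ⟨x, hxnc⟩
  have hval1 : ∀ v : Vx R, 2 * icount (Nbx v) ({a0} : Finset (Vx R)) + 1 ≤ (Nbx v).card := by
    intro v
    have h1 : icount (Nbx v) ({a0} : Finset (Vx R)) ≤ 1 := by
      have h := icount_le_right (Nbx v) ({a0} : Finset (Vx R))
      simpa using h
    have h2 := Nbx_card v
    have h3 := two_le_DFx_card (vx_exists_noncomm v) (vx_ne_zero hz v)
    omega
  obtain ⟨f1, hf1a, hf1b, hf1c⟩ := weight_mem ({a0} : Finset (Vx R)) hval1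
  have hmem1 : ((Fintype.card (Vx R) : ℤ) - 2) ∈ W := by
    refine hWin _ f1 hf1a hf1b ?_
    rw [← hf1c, Finset.card_singleton]
    norm_num
  have hsinf3 : sInf W ≤ (Fintype.card R : ℤ) - 3 := by
    have h := csInf_le hbdd hmem1
    omega
  constructor
  · intro hcon
    rw [hcon] at hsinf3
    omega
  · -- second part
    have hfinish : ((Fintype.card (Vx R) : ℤ) - 6) ∈ W → sInf W ≠ (Fintype.card R : ℤ) - 5 := by
      intro hmem hcon
      have hs := csInf_le hbdd hmem
      rw [hcon] at hs
      omega
    have hxex : ∃ u : R, ¬ u * x = x * u := vx_exists_noncomm a0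
    have hd2 : 2 ≤ (CFx x).card := two_le_CFx_card hx0
    have hdd : (CFx x).card + (DFx x).card = Fintype.card R := CFx_card_add_DFx_card x
    have hdle : (CFx x).card ≤ (DFx x).card := CFx_card_le_DFx_card hxex.choose_spec
    have hdvd : (CFx x).card ∣ Fintype.card R := CFx_card_dvd x
    have hcases : Fintype.card R = 4 ∨ Fintype.card R = 5 ∨ Fintype.card R = 6 ∨
        Fintype.card R = 7 ∨ 8 ≤ Fintype.card R := by omega
    rcases hcases with h4 | h5 | h6 | h7 | h8
    · -- card = 4 : the complement graph is complete, so every weight is ≥ 1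
      have hlow : ∀ w ∈ W, (1:ℤ) ≤ w := by
        intro w hw
        obtain ⟨f, hfa, hfb, rfl⟩ := hWout w hw
        have hfil : Nbx a0 = Finset.univ := by
          apply Finset.eq_univ_iff_forall.2
          intro u
          rw [mem_Nbx]
          by_cases hu : u = a0
          · right; exact hu
          · left
            have hune : (u:R) ≠ 0 := vx_ne_zero hz u
            have hvalne : (u:R) ≠ (a0:R) := fun h => hu (Subtype.ext h)
            exact noncomm_of_card_four hz h4 hune (vx_ne_zero hz a0) hvalne
        have h := hfb a0
        rw [hfil] at h
        exact h
      intro hcon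
      have h1le := le_csInf ⟨_, hmem1⟩ hlow
      rw [hcon, h4] at h1le
      norm_num at h1le
    · exfalso
      have hb1 : (CFx x).card = 2 := by omega
      rw [hb1, h5] at hdvd
      omega
    · exact absurd (comm_of_card_eq_two_mul_prime (p := 3) (by norm_num) (by norm_num)
        (by omega) x y) hxy
    · exfalso
      have hb1 : (CFx x).card = 2 ∨ (CFx x).card = 3 := by omega
      rcases hb1 with h | h <;> rw [h, h7] at hdvd <;> omega
    · -- 8 ≤ card R
      by_cases hA : ∀ v : Vx R, 6 ≤ (DFx (v:R)).card
      · -- any triple of distinct vertices works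
        have h1lt : 1 < (Finset.univ : Finset (Vx R)).card := by
          rw [Finset.card_univ]; omega
        obtain ⟨b, -, hba⟩ := Finset.exists_mem_ne h1lt a0
        have hsd : 0 < ((Finset.univ : Finset (Vx R)) \ {a0, b}).card := by
          have hle2 : ({a0, b} : Finset (Vx R)).card ≤ 2 := by
            apply le_trans (Finset.card_insert_le _ _); simp
          have hs := Finset.le_card_sdiff ({a0, b} : Finset (Vx R)) Finset.univ
          rw [Finset.card_univ] at hs
          omega
        obtain ⟨c, hc⟩ := Finset.card_pos.1 hsd
        rw [Finset.mem_sdiff] at hc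
        have hca : c ≠ a0 := by intro h; apply hc.2; simp [h]
        have hcb : c ≠ b := by intro h; apply hc.2; simp [h]
        have hval := valid_of_DF_big hA ({a0, b, c} : Finset (Vx R)) (card_triple_le _ _ _)
        obtain ⟨f3, hf3a, hf3b, hf3c⟩ := weight_mem _ hval
        have hcard3 : ({a0, b, c} : Finset (Vx R)).card = 3 := by
          rw [Finset.card_insert_of_notMem (by simp [Ne.symm hba, Ne.symm hca]),
            Finset.card_insert_of_notMem (by simp [Ne.symm hcb]), Finset.card_singleton]
        apply hfinish
        refine hWin _ f3 hf3a hf3b ?_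
        rw [← hf3c, hcard3]
        norm_num
      · push_neg at hA
        obtain ⟨v1, hv1⟩ := hA
        have h2w : 2 ≤ (CFx (v1:R)).card := two_le_CFx_card (vx_ne_zero hz v1)
        have hddw : (CFx (v1:R)).card + (DFx (v1:R)).card = Fintype.card R :=
          CFx_card_add_DFx_card _
        have hdlew : (CFx (v1:R)).card ≤ (DFx (v1:R)).card :=
          CFx_card_le_DFx_card (vx_exists_noncomm v1).choose_spec
        have hdvdw : (CFx (v1:R)).card ∣ Fintype.card R := CFx_card_dvd _
        have hne10 : Fintype.card R ≠ 10 := by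
          intro h10
          exact hxy (comm_of_card_eq_two_mul_prime (p := 5) (by norm_num) (by norm_num)
            (by omega) x y)
        have hne9 : Fintype.card R ≠ 9 := by
          intro h9
          have hq : (CFx (v1:R)).card = 4 := by omega
          rw [hq, h9] at hdvdw
          omega
        have h8e : Fintype.card R = 8 := by omega
        have hd4 : (CFx (v1:R)).card = 4 := by
          have hb1 : (CFx (v1:R)).card = 3 ∨ (CFx (v1:R)).card = 4 := by omega
          rcases hb1 with h | h
          · rw [h, h8e] at hdvdw; omega
          · exact h
        have hcomm0 := CFx_comm_of_card_four (vx_ne_zero hz v1) hd4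
        have her : ((CFx (v1:R)).erase 0).card = 3 := by
          rw [Finset.card_erase_of_mem zero_mem_CFx, hd4]
        obtain ⟨aR, bR, cR, habR, hacR, hbcR, hset⟩ := Finset.card_eq_three.1 her
        have hmem : ∀ z ∈ ({aR, bR, cR} : Finset R), z ≠ 0 ∧ z ∈ CFx (v1:R) := by
          intro z hzm
          rw [← hset] at hzm
          exact ⟨(Finset.mem_erase.1 hzm).1, (Finset.mem_erase.1 hzm).2⟩
        have haP := hmem aR (by simp)
        have hbP := hmem bR (by simp)
        have hcP := hmem cR (by simp)
        have hanc : aR ∉ Set.center R := fun hcen =>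
          haP.1 (by rwa [hz, Set.mem_singleton_iff] at hcen)
        have hbnc : bR ∉ Set.center R := fun hcen =>
          hbP.1 (by rwa [hz, Set.mem_singleton_iff] at hcen)
        have hcnc : cR ∉ Set.center R := fun hcen =>
          hcP.1 (by rwa [hz, Set.mem_singleton_iff] at hcen)
        let av : Vx R := ⟨aR, hanc⟩
        let bv : Vx R := ⟨bR, hbnc⟩
        let cv : Vx R := ⟨cR, hcnc⟩
        have hvalmem : ∀ u : Vx R, u ∈ ({av, bv, cv} : Finset (Vx R)) →
            (u:R) ∈ CFx (v1:R) := by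
          intro u hu
          have hu' : (u:R) ∈ ({aR, bR, cR} : Finset R) := by
            rcases Finset.mem_insert.1 hu with h | h
            · rw [h]; simp [av]
            · rcases Finset.mem_insert.1 h with h | h
              · rw [h]; simp [bv]
              · rw [Finset.mem_singleton] at h; rw [h]; simp [cv]
          exact (hmem _ hu').2
        have hcommT : ∀ u w : Vx R, u ∈ ({av, bv, cv} : Finset (Vx R)) →
            w ∈ ({av, bv, cv} : Finset (Vx R)) → (u:R) * w = (w:R) * u := by
          intro u w hu hw
          exact hcomm0 _ (hvalmem u hu) _ (hvalmem w hw)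
        have hbigT : ∀ v : Vx R, ¬ (av:R) * v = (v:R) * av → ¬ (bv:R) * v = (v:R) * bv →
            ¬ (cv:R) * v = (v:R) * cv → 6 ≤ (DFx (v:R)).card := by
          intro v hna hnb hnc2
          have hint : ∀ z, z ∈ CFx (v:R) → z ∈ CFx (v1:R) → z = 0 := by
            intro z h1 h2
            by_contra hz0
            have hzin : z ∈ (CFx (v1:R)).erase 0 := Finset.mem_erase.2 ⟨hz0, h2⟩
            rw [hset] at hzin
            rcases Finset.mem_insert.1 hzin with h | h
            · rw [h] at h1; exact hna (mem_CFx.1 h1)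
            · rcases Finset.mem_insert.1 h with h | h
              · rw [h] at h1; exact hnb (mem_CFx.1 h1)
              · rw [Finset.mem_singleton] at h; rw [h] at h1; exact hnc2 (mem_CFx.1 h1)
          have hprod := CFx_mul_le (v:R) (v1:R) hint
          rw [hd4] at hprod
          have hsum2 := CFx_card_add_DFx_card (v:R)
          omega
        have hval := triple_valid hz h8 av bv cv hcommT hbigT
        obtain ⟨f3, hf3a, hf3b, hf3c⟩ := weight_mem _ hval
        have hav : av ≠ bv := fun h => habR (congrArg Subtype.val h)
        have hav2 : av ≠ cv := fun h => hacR (congrArg Subtype.val h)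
        have hbv2 : bv ≠ cv := fun h => hbcR (congrArg Subtype.val h)
        have hcard3 : ({av, bv, cv} : Finset (Vx R)).card = 3 := by
          rw [Finset.card_insert_of_notMem (by simp [hav, hav2]),
            Finset.card_insert_of_notMem (by simp [hbv2]), Finset.card_singleton]
        apply hfinish
        refine hWin _ f3 hf3a hf3b ?_
        rw [← hf3c, hcard3]
        norm_num

end
end
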